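/- Let π be a group as in the Setup. Then for every γ ∈ π and b ∈ π∖{e}, the normalizer of H_{γ,b} in π × π equals {(γkhγ⁻¹, h) ∈ π × π | h, k ∈ Z_π(b)}, and this normalizer is isomorphic as a group to Z_π(b) × Z_π(b). -/

import Mathlib

/-- The diagonal homomorphism `π → π × π`. -/
def diagHom (π : Type*) [Group π] : π →* π × π :=
  MonoidHom.prod (MonoidHom.id π) (MonoidHom.id π)

/-- The subgroup `H_{γ,S} = (γ,e)·Δ(Z_π(S))·(γ⁻¹,e)` of `π × π`. -/
def Hsub {π : Type*} [Group π] (γ : π) (S : Set π) : Subgroup (π × π) :=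
  Subgroup.map (MulAut.conj ((γ, (1 : π)) : π × π)).toMonoidHom
    (Subgroup.map (diagHom π) (Subgroup.centralizer S))

/-- A family `P` of subgroups of `π` is a malnormal collection if for all `i, j` and `g ∈ π`,
either `gP_ig⁻¹ ∩ P_j = {e}`, or `i = j` and `g ∈ P_i`. -/
def IsMalnormalCollection {π : Type*} [Group π] {I : Type*} (P : I → Subgroup π) : Prop :=
  ∀ i j : I, ∀ g : π,
    Subgroup.map (MulAut.conj g).toMonoidHom (P i) ⊓ P j = ⊥ ∨ (i = j ∧ g ∈ P i)

/-- Old Mathlib `Monoid.IsTorsionFree` (removed): no nontrivial element has finite order. -/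
def Monoid.IsTorsionFree (G : Type*) [Monoid G] : Prop :=
  ∀ g : G, g ≠ 1 → ¬IsOfFinOrder g

private theorem conj_zpow' {π : Type*} [Group π] (a x : π) (n : ℤ) :
    a * x ^ n * a⁻¹ = (a * x * a⁻¹) ^ n := by
  simpa [MulAut.conj_apply] using (MulAut.conj a).map_zpow x n

theorem key {π : Type*} [Group π] {I : Type*} (P : I → Subgroup π)
    (htf : Monoid.IsTorsionFree π)
    (hmal : IsMalnormalCollection P)
    (hab : ∀ i : I, IsMulCommutative (P i))
    (hcyc : ∀ b : π, (¬ ∃ (i : I) (g : π), g * b * g⁻¹ ∈ P i) →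
      IsCyclic (Subgroup.centralizer ({b} : Set π)))
    (b : π) (hb : b ≠ 1) :
    (∀ x ∈ Subgroup.centralizer ({b} : Set π), ∀ z ∈ Subgroup.centralizer ({b} : Set π),
        x * z = z * x) ∧
    (∀ y : π, (∀ z ∈ Subgroup.centralizer ({b} : Set π), y * z * y⁻¹ ∈ Subgroup.centralizer ({b} : Set π)) →
      (∀ z ∈ Subgroup.centralizer ({b} : Set π), y⁻¹ * z * y ∈ Subgroup.centralizer ({b} : Set π)) →
      y ∈ Subgroup.centralizer ({b} : Set π)) := by
  set Z := Subgroup.centralizer ({b} : Set π) with hZ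
  have hbZ : b ∈ Z := Subgroup.mem_centralizer_singleton_iff.mpr rfl
  have conjconj : ∀ u v w : π, (u*v*u⁻¹) * (u*w*u⁻¹) * (u*v*u⁻¹)⁻¹ = u*(v*w*v⁻¹)*u⁻¹ := by
    intro u v w; group
  by_cases hconj : ∃ (i : I) (g : π), g * b * g⁻¹ ∈ P i
  · obtain ⟨i, g, hg⟩ := hconj
    have hgb1 : g * b * g⁻¹ ≠ 1 := by
      intro h
      apply hb
      have := congrArg (fun x => g⁻¹ * x * g) h
      simpa [mul_assoc] using this
    -- any element centralizing b maps into P i under conj by g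
    have hsub : ∀ c ∈ Z, g * c * g⁻¹ ∈ P i := by
      intro c hc
      rcases hmal i i (g * c * g⁻¹) with hbot | ⟨_, hmem⟩
      · exfalso
        have hcb : c * b = b * c := Subgroup.mem_centralizer_singleton_iff.mp hc
        have h1 : g * b * g⁻¹ ∈ Subgroup.map (MulAut.conj (g * c * g⁻¹)).toMonoidHom (P i) := by
          refine Subgroup.mem_map.mpr ⟨g * b * g⁻¹, hg, ?_⟩
          simp only [MulEquiv.coe_toMonoidHom, MulAut.conj_apply]
          rw [show g * c * g⁻¹ = g * c * g⁻¹ from rfl]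
          calc (g*c*g⁻¹) * (g*b*g⁻¹) * (g*c*g⁻¹)⁻¹ = g*(c*b*c⁻¹)*g⁻¹ := conjconj g c b
            _ = g * b * g⁻¹ := by rw [hcb]; group
        have : g * b * g⁻¹ ∈ (⊥ : Subgroup π) := hbot ▸ Subgroup.mem_inf.mpr ⟨h1, hg⟩
        exact hgb1 (Subgroup.mem_bot.mp this)
      · exact hmem
    -- conversely g⁻¹ (P i) g ⊆ Z
    have hsup : ∀ p ∈ P i, g⁻¹ * p * g ∈ Z := by
      intro p hp
      have hcomm : (g * b * g⁻¹) * p = p * (g * b * g⁻¹) := by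
        have := (hab i).is_comm.comm ⟨_, hg⟩ ⟨p, hp⟩
        exact congrArg Subtype.val this
      refine Subgroup.mem_centralizer_singleton_iff.mpr ?_
      calc g⁻¹ * p * g * b = g⁻¹ * (p * (g * b * g⁻¹)) * g := by group
        _ = g⁻¹ * ((g * b * g⁻¹) * p) * g := by rw [hcomm]
        _ = b * (g⁻¹ * p * g) := by group
    constructor
    · intro x hx z hz
      have h1 := hsub x hx
      have h2 := hsub z hz
      have h3 : (g * x * g⁻¹) * (g * z * g⁻¹) = (g * z * g⁻¹) * (g * x * g⁻¹) :=
        congrArg Subtype.val ((hab i).is_comm.comm ⟨_, h1⟩ ⟨_, h2⟩)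
      calc x * z = g⁻¹ * ((g * x * g⁻¹) * (g * z * g⁻¹)) * g := by group
        _ = g⁻¹ * ((g * z * g⁻¹) * (g * x * g⁻¹)) * g := by rw [h3]
        _ = z * x := by group
    · intro y hy _
      have h1 : y * b * y⁻¹ ∈ Z := hy b hbZ
      have h2 : g * (y * b * y⁻¹) * g⁻¹ ∈ P i := hsub _ h1
      rcases hmal i i (g * y * g⁻¹) with hbot | ⟨_, hmem⟩
      · exfalso
        have hin : g * (y * b * y⁻¹) * g⁻¹ ∈
            Subgroup.map (MulAut.conj (g * y * g⁻¹)).toMonoidHom (P i) := by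
          refine Subgroup.mem_map.mpr ⟨g * b * g⁻¹, hg, ?_⟩
          simp only [MulEquiv.coe_toMonoidHom, MulAut.conj_apply]
          exact conjconj g y b
        have hne : g * (y * b * y⁻¹) * g⁻¹ ≠ 1 := by
          intro h
          apply hb
          have := congrArg (fun x => y⁻¹ * (g⁻¹ * x * g) * y) h
          simpa [mul_assoc] using this
        have : g * (y * b * y⁻¹) * g⁻¹ ∈ (⊥ : Subgroup π) :=
          hbot ▸ Subgroup.mem_inf.mpr ⟨hin, h2⟩
        exact hne (Subgroup.mem_bot.mp this)
      · have := hsup _ hmem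
        simpa [mul_assoc] using this
  · have hZcyc : IsCyclic Z := hcyc b hconj
    obtain ⟨c, hc⟩ := hZcyc.exists_generator
    have hcoe : ∀ (x : π) (hx : x ∈ Z) (m : ℤ), (c : Z) ^ m = (⟨x, hx⟩ : Z) → x = (c : π) ^ m := by
      intro x hx m h
      have := congrArg (Subtype.val : Z → π) h.symm
      simpa using this
    obtain ⟨n, hn'⟩ := hc ⟨b, hbZ⟩
    have hn : b = (c : π) ^ n := hcoe b hbZ n hn'
    have hc1 : (c : π) ≠ 1 := by
      intro h
      exact hb (by rw [hn, h, one_zpow])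
    have hinj : Function.Injective fun m : ℤ => (c : π) ^ m :=
      injective_zpow_iff_not_isOfFinOrder.mpr (htf _ hc1)
    have habZ : ∀ x ∈ Z, ∀ z ∈ Z, x * z = z * x := by
      intro x hx z hz
      obtain ⟨m1, h1⟩ := hc ⟨x, hx⟩
      obtain ⟨m2, h2⟩ := hc ⟨z, hz⟩
      rw [hcoe x hx m1 h1, hcoe z hz m2 h2, ← zpow_add, ← zpow_add, add_comm]
    refine ⟨habZ, ?_⟩
    intro y hy hy'
    have hcZ : (c : π) ∈ Z := c.2
    obtain ⟨m, hm'⟩ := hc ⟨_, hy _ hcZ⟩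
    have hm : y * (c : π) * y⁻¹ = (c : π) ^ m := hcoe _ (hy _ hcZ) m hm'
    obtain ⟨l, hl'⟩ := hc ⟨_, hy' _ hcZ⟩
    have hl : y⁻¹ * (c : π) * y = (c : π) ^ l := hcoe _ (hy' _ hcZ) l hl'
    have hml : (c : π) ^ (l * m) = (c : π) ^ (1 : ℤ) := by
      have h1 : (c : π) = y⁻¹ * (c : π) ^ m * y := by rw [← hm]; group
      have h2 : y⁻¹ * (c : π) ^ m * y = (y⁻¹ * (c : π) * y) ^ m := by
        simpa using conj_zpow' y⁻¹ (c : π) m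
      rw [zpow_mul, ← hl, ← h2, ← h1, zpow_one]
    have hlm : l * m = 1 := hinj hml
    rcases Int.mul_eq_one_iff_eq_one_or_neg_one.mp hlm with ⟨_, hm1⟩ | ⟨_, hm1⟩
    · -- m = 1 : y commutes with c, hence with b
      subst hm1
      have hyc : y * (c : π) = (c : π) * y := by
        have := hm
        rw [zpow_one] at this
        calc y * (c : π) = (y * (c : π) * y⁻¹) * y := by group
          _ = (c : π) * y := by rw [this]
      have hcomm : Commute y (c : π) := hyc
      refine Subgroup.mem_centralizer_singleton_iff.mpr ?_
      rw [hn]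
      exact (hcomm.zpow_right n).eq
    · -- m = -1 : contradiction
      exfalso
      subst hm1
      rw [zpow_neg, zpow_one] at hm
      -- (y*y) commutes with c
      have hy2c : (y*y) * (c : π) * ((y*y))⁻¹ = (c : π) := by
        calc (y*y) * (c : π) * ((y*y))⁻¹ = y * (y * (c : π) * y⁻¹) * y⁻¹ := by group
          _ = y * (c : π)⁻¹ * y⁻¹ := by rw [hm]
          _ = (y * (c : π) * y⁻¹)⁻¹ := by group
          _ = ((c : π)⁻¹)⁻¹ := by rw [hm]
          _ = (c : π) := inv_inv _
      have hy2Z : (y*y) ∈ Z := by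
        refine Subgroup.mem_centralizer_singleton_iff.mpr ?_
        have hcomm : Commute ((y*y)) (c : π) := by
          calc (y*y) * (c : π) = ((y*y) * (c : π) * ((y*y))⁻¹) * (y*y) := by group
            _ = (c : π) * (y*y) := by rw [hy2c]
        rw [hn]
        exact (hcomm.zpow_right n).eq
      obtain ⟨s, hs'⟩ := hc ⟨_, hy2Z⟩
      have hs : (y*y) = (c : π) ^ s := hcoe _ hy2Z s hs'
      have hss : (c : π) ^ (-s) = (c : π) ^ s := by
        calc (c : π) ^ (-s) = ((c : π)⁻¹) ^ s := by rw [zpow_neg, inv_zpow]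
          _ = (y * (c : π) * y⁻¹) ^ s := by rw [hm]
          _ = y * (c : π) ^ s * y⁻¹ := (conj_zpow' y (c : π) s).symm
          _ = y * (y*y) * y⁻¹ := by rw [← hs]
          _ = y * y := by group
          _ = (c : π) ^ s := hs
      have hs0 : s = 0 := by
        have := hinj hss
        omega
      have hy2 : (y*y) = 1 := by rw [hs, hs0, zpow_zero]
      have hy1 : y = 1 := by
        by_contra hy1
        exact htf y hy1 (isOfFinOrder_iff_pow_eq_one.mpr ⟨2, by norm_num, by rw [pow_two]; exact hy2⟩)
      rw [hy1] at hm
      simp at hm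
      exact hc1 (by
        have : (c : π) * (c : π) = 1 := mul_eq_one_iff_eq_inv.mpr hm
        by_contra hcne
        exact htf _ hcne (isOfFinOrder_iff_pow_eq_one.mpr ⟨2, by norm_num, by rw [pow_two]; exact this⟩))

theorem mem_Hsub {π : Type*} [Group π] (γ : π) (S : Set π) (p : π × π) :
    p ∈ Hsub γ S ↔ ∃ z ∈ Subgroup.centralizer S, p = (γ * z * γ⁻¹, z) := by
  constructor
  · rintro ⟨q, ⟨z, hz, rfl⟩, rfl⟩
    exact ⟨z, hz, by simp [diagHom, MulAut.conj_apply, Prod.ext_iff, mul_assoc]⟩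
  · rintro ⟨z, hz, rfl⟩
    exact ⟨(z, z), ⟨z, hz, rfl⟩, by simp [diagHom, MulAut.conj_apply, Prod.ext_iff, mul_assoc]⟩

set_option maxHeartbeats 1000000 in
/-- For a group `π` as in the Setup, for every `γ ∈ π` and `b ∈ π∖{e}`, the normalizer of
`H_{γ,b}` in `π × π` equals `{(γkhγ⁻¹, h) | h, k ∈ Z_π(b)}` and is isomorphic to
`Z_π(b) × Z_π(b)`. -/
theorem normalizer_Hsub {π : Type*} [Group π] {I : Type*} (P : I → Subgroup π)
    (htf : Monoid.IsTorsionFree π)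
    (hmal : IsMalnormalCollection P)
    (hab : ∀ i : I, IsMulCommutative (P i))
    (hcyc : ∀ b : π, (¬ ∃ (i : I) (g : π), g * b * g⁻¹ ∈ P i) →
      IsCyclic (Subgroup.centralizer ({b} : Set π))) :
    ∀ γ b : π, b ≠ 1 →
      ((Subgroup.normalizer (Hsub γ ({b} : Set π) : Set (π × π)) : Set (π × π)) =
        {p : π × π | ∃ h k : π, h ∈ Subgroup.centralizer ({b} : Set π) ∧
          k ∈ Subgroup.centralizer ({b} : Set π) ∧ p = (γ * k * h * γ⁻¹, h)}) ∧
      Nonempty (Subgroup.normalizer (Hsub γ ({b} : Set π) : Set (π × π)) ≃*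
        Subgroup.centralizer ({b} : Set π) × Subgroup.centralizer ({b} : Set π)) := by
  intro γ b hb
  obtain ⟨hcomm, hnorm⟩ := key P htf hmal hab hcyc b hb
  set Z := Subgroup.centralizer ({b} : Set π) with hZdef
  have hbZ : b ∈ Z := Subgroup.mem_centralizer_singleton_iff.mpr rfl
  -- the conjugation claim
  have claim : ∀ h ∈ Z, ∀ k ∈ Z, ∀ n ∈ Hsub γ ({b} : Set π),
      ((γ * k * h * γ⁻¹, h) : π × π) * n * ((γ * k * h * γ⁻¹, h) : π × π)⁻¹ ∈
        Hsub γ ({b} : Set π) := by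
    intro h hh k hk n hn
    obtain ⟨z, hz, rfl⟩ := (mem_Hsub γ _ n).mp hn
    refine (mem_Hsub γ _ _).mpr ⟨z, hz, ?_⟩
    have e2 : h * z * h⁻¹ = z := by
      rw [hcomm h hh z hz]; group
    have e1 : (γ*k*h*γ⁻¹) * (γ*z*γ⁻¹) * (γ*k*h*γ⁻¹)⁻¹ = γ*z*γ⁻¹ := by
      have : k * (h * z * h⁻¹) * k⁻¹ = z := by
        rw [e2, hcomm k hk z hz]; group
      calc (γ*k*h*γ⁻¹) * (γ*z*γ⁻¹) * (γ*k*h*γ⁻¹)⁻¹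
          = γ * (k * (h * z * h⁻¹) * k⁻¹) * γ⁻¹ := by group
        _ = γ*z*γ⁻¹ := by rw [this]
    ext
    · simpa using e1
    · simpa using e2
  -- set equality
  have hset : (Subgroup.normalizer (Hsub γ ({b} : Set π) : Set (π × π)) : Set (π × π)) =
      {p : π × π | ∃ h k : π, h ∈ Z ∧ k ∈ Z ∧ p = (γ * k * h * γ⁻¹, h)} := by
    ext p
    constructor
    · intro hp
      have hp' : p ∈ Subgroup.normalizer (Hsub γ ({b} : Set π) : Set (π × π)) := hp
      have hpinv : p⁻¹ ∈ Subgroup.normalizer (Hsub γ ({b} : Set π) : Set (π × π)) := inv_mem hp'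
      obtain ⟨x, y⟩ := p
      have hmem := Subgroup.mem_normalizer_iff.mp hp'
      have hmeminv := Subgroup.mem_normalizer_iff.mp hpinv
      -- conjugation sends (γzγ⁻¹, z) into H
      have hfwd : ∀ z ∈ Z, y * z * y⁻¹ ∈ Z ∧
          x * (γ * z * γ⁻¹) * x⁻¹ = γ * (y * z * y⁻¹) * γ⁻¹ := by
        intro z hz
        have h1 : ((x, y) : π × π) * (γ*z*γ⁻¹, z) * ((x, y) : π × π)⁻¹ ∈ Hsub γ ({b} : Set π) :=
          (hmem _).mp ((mem_Hsub γ _ _).mpr ⟨z, hz, rfl⟩)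
        obtain ⟨z', hz', hzeq⟩ := (mem_Hsub γ _ _).mp h1
        have e2 : y * z * y⁻¹ = z' := congrArg Prod.snd hzeq
        have e1 : x * (γ*z*γ⁻¹) * x⁻¹ = γ * z' * γ⁻¹ := congrArg Prod.fst hzeq
        exact ⟨e2 ▸ hz', by rw [e1, e2]⟩
      have hbwd : ∀ z ∈ Z, y⁻¹ * z * y ∈ Z := by
        intro z hz
        have h1 : ((x, y) : π × π)⁻¹ * (γ*z*γ⁻¹, z) * (((x, y) : π × π)⁻¹)⁻¹ ∈
            Hsub γ ({b} : Set π) :=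
          (hmeminv _).mp ((mem_Hsub γ _ _).mpr ⟨z, hz, rfl⟩)
        obtain ⟨z', hz', hzeq⟩ := (mem_Hsub γ _ _).mp h1
        have e2 : y⁻¹ * z * y = z' := by simpa using congrArg Prod.snd hzeq
        exact e2 ▸ hz'
      have hyZ : y ∈ Z := hnorm y (fun z hz => (hfwd z hz).1) hbwd
      -- k := γ⁻¹ x γ y⁻¹
      have hxb : x * (γ * b * γ⁻¹) * x⁻¹ = γ * b * γ⁻¹ := by
        have := (hfwd b hbZ).2
        have hyb : y * b * y⁻¹ = b := by
          rw [show y * b = b * y from Subgroup.mem_centralizer_singleton_iff.mp hyZ]; group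
        rwa [hyb] at this
      have hkZ : γ⁻¹ * x * γ * y⁻¹ ∈ Z := by
        refine Subgroup.mem_centralizer_singleton_iff.mpr ?_
        have hyb : y⁻¹ * b = b * y⁻¹ := by
          have := Subgroup.mem_centralizer_singleton_iff.mp hyZ
          calc y⁻¹ * b = y⁻¹ * (b * y) * y⁻¹ := by group
            _ = y⁻¹ * (y * b) * y⁻¹ := by rw [← this]
            _ = b * y⁻¹ := by group
        have hxb' : (γ⁻¹ * x * γ) * b = b * (γ⁻¹ * x * γ) := by
          calc (γ⁻¹ * x * γ) * b = γ⁻¹ * (x * (γ * b * γ⁻¹) * x⁻¹) * (x * γ) := by group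
            _ = γ⁻¹ * (γ * b * γ⁻¹) * (x * γ) := by rw [hxb]
            _ = b * (γ⁻¹ * x * γ) := by group
        calc γ⁻¹ * x * γ * y⁻¹ * b = (γ⁻¹ * x * γ) * (y⁻¹ * b) := by group
          _ = (γ⁻¹ * x * γ) * (b * y⁻¹) := by rw [hyb]
          _ = ((γ⁻¹ * x * γ) * b) * y⁻¹ := by group
          _ = (b * (γ⁻¹ * x * γ)) * y⁻¹ := by rw [hxb']
          _ = b * (γ⁻¹ * x * γ * y⁻¹) := by group
      refine ⟨y, γ⁻¹ * x * γ * y⁻¹, hyZ, hkZ, ?_⟩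
      ext
      · show x = γ * (γ⁻¹ * x * γ * y⁻¹) * y * γ⁻¹
        group
      · rfl
    · rintro ⟨h, k, hh, hk, rfl⟩
      refine Subgroup.mem_normalizer_iff.mpr fun n => ⟨fun hn => claim h hh k hk n hn, ?_⟩
      intro hn
      have hinv : ((γ * k * h * γ⁻¹, h) : π × π)⁻¹ = ((γ * k⁻¹ * h⁻¹ * γ⁻¹, h⁻¹) : π × π) := by
        ext
        · show (γ * k * h * γ⁻¹)⁻¹ = γ * k⁻¹ * h⁻¹ * γ⁻¹
          have : k⁻¹ * h⁻¹ = h⁻¹ * k⁻¹ := by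
            have := hcomm h hh k hk
            calc k⁻¹ * h⁻¹ = k⁻¹ * h⁻¹ * (k * h) * h⁻¹ * k⁻¹ := by group
              _ = k⁻¹ * h⁻¹ * (h * k) * h⁻¹ * k⁻¹ := by rw [← this]
              _ = h⁻¹ * k⁻¹ := by group
          rw [show γ * k⁻¹ * h⁻¹ * γ⁻¹ = γ * (k⁻¹ * h⁻¹) * γ⁻¹ by group, this]
          group
        · rfl
      have h2 := claim h⁻¹ (inv_mem hh) k⁻¹ (inv_mem hk)
        _ hn
      rw [← hinv] at h2
      have : ((γ * k * h * γ⁻¹, h) : π × π)⁻¹ *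
          (((γ * k * h * γ⁻¹, h) : π × π) * n * ((γ * k * h * γ⁻¹, h) : π × π)⁻¹) *
          (((γ * k * h * γ⁻¹, h) : π × π)⁻¹)⁻¹ = n := by group
      rwa [this] at h2
  refine ⟨hset, ?_⟩
  -- the isomorphism
  let φ : (Z × Z) →* π × π :=
    { toFun := fun q => (γ * (q.1 : π) * (q.2 : π) * γ⁻¹, (q.2 : π))
      map_one' := by simp
      map_mul' := by
        rintro ⟨k1, h1⟩ ⟨k2, h2⟩
        have hc : (h1 : π) * (k2 : π) = (k2 : π) * (h1 : π) := hcomm _ h1.2 _ k2.2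
        ext
        · show γ * ((k1 : π) * k2) * ((h1 : π) * h2) * γ⁻¹ =
            (γ * k1 * h1 * γ⁻¹) * (γ * k2 * h2 * γ⁻¹)
          calc γ * ((k1 : π) * k2) * ((h1 : π) * h2) * γ⁻¹
              = γ * (k1 : π) * ((k2 : π) * (h1 : π)) * h2 * γ⁻¹ := by group
            _ = γ * (k1 : π) * ((h1 : π) * (k2 : π)) * h2 * γ⁻¹ := by rw [hc]
            _ = (γ * k1 * h1 * γ⁻¹) * (γ * k2 * h2 * γ⁻¹) := by group
        · rfl }
  have hφinj : Function.Injective φ := by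
    rintro ⟨k1, h1⟩ ⟨k2, h2⟩ heq
    have e2 : (h1 : π) = h2 := congrArg Prod.snd heq
    have e1 : γ * (k1 : π) * h1 * γ⁻¹ = γ * (k2 : π) * h2 * γ⁻¹ := congrArg Prod.fst heq
    have ek : (k1 : π) = k2 := by
      rw [e2] at e1
      exact mul_left_cancel (mul_right_cancel (mul_right_cancel e1))
    simp only [Prod.mk.injEq]
    exact ⟨Subtype.ext ek, Subtype.ext e2⟩
  have hrange : Subgroup.normalizer (Hsub γ ({b} : Set π) : Set (π × π)) = φ.range := by
    apply Subgroup.ext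
    intro p
    rw [← Subgroup.mem_carrier]
    change p ∈ (Subgroup.normalizer (Hsub γ ({b} : Set π) : Set (π × π)) : Set (π × π)) ↔ _
    rw [hset]
    constructor
    · rintro ⟨h, k, hh, hk, rfl⟩
      exact ⟨(⟨k, hk⟩, ⟨h, hh⟩), rfl⟩
    · rintro ⟨⟨k, h⟩, rfl⟩
      exact ⟨h, k, h.2, k.2, rfl⟩
  exact ⟨(MulEquiv.subgroupCongr hrange).trans (MonoidHom.ofInjective hφinj).symm⟩
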